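/- (Deviation between the averaged v- and x-iterates.) Let A ≥ 0, a > 0 and A' := A + a. Let x_i, v_i, x_i⁺, v_i⁺ ∈ ℝ^d for i = 1,…,n, set y_i := (A·x_i + a·v_i)/A', and write x̄ := (1/n)·∑_i x_i, v̄ := (1/n)·∑_i v_i, x̄⁺ := (1/n)·∑_i x_i⁺, v̄⁺ := (1/n)·∑_i v_i⁺. Then ‖v̄⁺ − x̄⁺‖² ≤ (A/A')·‖v̄ − x̄‖² + (4A'/a)·(1/n)·∑_{i=1}^n ‖x_i⁺ − y_i‖² + (2A'/a)·(1/n)·∑_{i=1}^n ‖v_i⁺ − v_i‖². -/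

import Mathlib

open scoped BigOperators

abbrev Vec (d : ℕ) := EuclideanSpace ℝ (Fin d)

private lemma jensen_norm_sq {d n : ℕ} (hn : 1 ≤ n) (z : Fin n → Vec d) :
    ‖(1 / (n : ℝ)) • ∑ i, z i‖ ^ 2 ≤ (1 / (n : ℝ)) * ∑ i, ‖z i‖ ^ 2 := by
  have hn' : (0 : ℝ) < n := by exact_mod_cast hn
  have h1 : ‖∑ i, z i‖ ≤ ∑ i, ‖z i‖ := norm_sum_le _ _
  have h2 : (∑ i, ‖z i‖) ^ 2 ≤ (n : ℝ) * ∑ i, ‖z i‖ ^ 2 := by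
    simpa using sq_sum_le_card_mul_sum_sq (s := Finset.univ) (f := fun i => ‖z i‖)
  have h3 : ‖(1 / (n : ℝ)) • ∑ i, z i‖ = (1 / (n : ℝ)) * ‖∑ i, z i‖ := by
    rw [norm_smul, Real.norm_eq_abs, abs_of_pos (by positivity)]
  rw [h3]
  have h4 : ‖∑ i, z i‖ ^ 2 ≤ (n : ℝ) * ∑ i, ‖z i‖ ^ 2 :=
    le_trans (pow_le_pow_left₀ (norm_nonneg _) h1 2) h2
  have : ((1 / (n : ℝ)) * ‖∑ i, z i‖) ^ 2 = (1 / (n : ℝ))^2 * ‖∑ i, z i‖^2 := by ring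
  rw [this]
  calc (1 / (n : ℝ))^2 * ‖∑ i, z i‖^2 ≤ (1 / (n : ℝ))^2 * ((n : ℝ) * ∑ i, ‖z i‖ ^ 2) := by
        apply mul_le_mul_of_nonneg_left h4 (by positivity)
    _ = (1 / (n : ℝ)) * ∑ i, ‖z i‖ ^ 2 := by field_simp

private lemma split_sq {E : Type*} [NormedAddCommGroup E] [InnerProductSpace ℝ E]
    (c : ℝ) (hc0 : 0 ≤ c) (hc1 : c < 1) (u q : E) :
    ‖c • u + q‖ ^ 2 ≤ c * ‖u‖ ^ 2 + (1 - c)⁻¹ * ‖q‖ ^ 2 := by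
  have ht : (0:ℝ) < 1 - c := by linarith
  have hinv : (1 - c) * (1 - c)⁻¹ = 1 := mul_inv_cancel₀ (ne_of_gt ht)
  have hexp : ‖c • u + q‖ ^ 2 = ‖c • u‖^2 + 2 * inner ℝ (c • u) q + ‖q‖^2 :=
    norm_add_sq_real _ _
  have hsm : ‖c • u‖ = c * ‖u‖ := by
    rw [norm_smul, Real.norm_eq_abs, abs_of_nonneg hc0]
  have hil : inner ℝ (c • u) q = c * (inner ℝ u q : ℝ) := real_inner_smul_left _ _ _
  have hcs : (inner ℝ u q : ℝ) ≤ ‖u‖ * ‖q‖ := real_inner_le_norm _ _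
  rw [hexp, hsm, hil]
  nlinarith [mul_nonneg hc0 (sq_nonneg ((1-c) * ‖u‖ - ‖q‖)), sq_nonneg ‖q‖,
    mul_pos ht (inv_pos.mpr ht), norm_nonneg u, norm_nonneg q,
    mul_nonneg (mul_nonneg hc0 ht.le) (sub_nonneg.mpr hcs)]

set_option maxHeartbeats 1000000 in
/-- Deviation between the averaged v- and x-iterates. -/
theorem stmt_17 (d n : ℕ) (hn : 1 ≤ n)
    (A a : ℝ) (hA : 0 ≤ A) (ha : 0 < a)
    (x v xp vp y : Fin n → Vec d)
    (hy : ∀ i, y i = (A + a)⁻¹ • (A • x i + a • v i))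
    (xbar vbar xbarp vbarp : Vec d)
    (hxbar : xbar = (1 / (n : ℝ)) • ∑ i, x i)
    (hvbar : vbar = (1 / (n : ℝ)) • ∑ i, v i)
    (hxbarp : xbarp = (1 / (n : ℝ)) • ∑ i, xp i)
    (hvbarp : vbarp = (1 / (n : ℝ)) • ∑ i, vp i) :
    ‖vbarp - xbarp‖ ^ 2
      ≤ (A / (A + a)) * ‖vbar - xbar‖ ^ 2
        + (4 * (A + a) / a) * ((1 / (n : ℝ)) * ∑ i, ‖xp i - y i‖ ^ 2)
        + (2 * (A + a) / a) * ((1 / (n : ℝ)) * ∑ i, ‖vp i - v i‖ ^ 2) := by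
  have hn' : (0 : ℝ) < n := by exact_mod_cast hn
  have hA' : (0:ℝ) < A + a := by linarith
  set c : ℝ := A / (A + a) with hc
  have hc0 : 0 ≤ c := by positivity
  have hc1 : c < 1 := by rw [hc, div_lt_one hA']; linarith
  have h1mc : 1 - c = a / (A + a) := by rw [hc]; field_simp; ring
  set q1 : Vec d := (1 / (n : ℝ)) • ∑ i, (xp i - y i) with hq1
  set q2 : Vec d := (1 / (n : ℝ)) • ∑ i, (vp i - v i) with hq2
  -- key vector identity
  have hkey : vbarp - xbarp = c • (vbar - xbar) + ((-q1) + q2) := by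
    have hsy : ∑ i, y i = (A + a)⁻¹ • (A • ∑ i, x i + a • ∑ i, v i) := by
      simp only [hy]
      rw [← Finset.smul_sum, Finset.sum_add_distrib, ← Finset.smul_sum, ← Finset.smul_sum]
    rw [hq1, hq2, hxbar, hvbar, hxbarp, hvbarp]
    simp only [Finset.sum_sub_distrib, hsy, smul_sub, smul_add]
    match_scalars <;> (simp only [hc]; try field_simp) <;> try ring
  have hs1 : ‖q1‖ ^ 2 ≤ (1 / (n : ℝ)) * ∑ i, ‖xp i - y i‖ ^ 2 := jensen_norm_sq hn _
  have hs2 : ‖q2‖ ^ 2 ≤ (1 / (n : ℝ)) * ∑ i, ‖vp i - v i‖ ^ 2 := jensen_norm_sq hn _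
  clear_value q1 q2
  have hsplit : ‖c • (vbar - xbar) + ((-q1) + q2)‖ ^ 2
      ≤ c * ‖vbar - xbar‖ ^ 2 + (1 - c)⁻¹ * ‖(-q1) + q2‖ ^ 2 :=
    split_sq c hc0 hc1 _ _
  have hq : ‖(-q1) + q2‖ ^ 2 ≤ 2 * ‖q1‖ ^ 2 + 2 * ‖q2‖ ^ 2 := by
    have := norm_add_sq_real (-q1) q2
    have hcs : (inner ℝ (-q1) q2 : ℝ) ≤ ‖-q1‖ * ‖q2‖ := real_inner_le_norm _ _
    have hn1 : ‖-q1‖ = ‖q1‖ := norm_neg _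
    rw [hn1] at this hcs
    nlinarith [sq_nonneg (‖q1‖ - ‖q2‖)]
  have hinv : (1 - c)⁻¹ = (A + a) / a := by rw [h1mc]; rw [inv_div]
  have hpos : (0:ℝ) < (A + a) / a := by positivity
  have hsum1 : (0:ℝ) ≤ (1 / (n : ℝ)) * ∑ i, ‖xp i - y i‖ ^ 2 := by positivity
  rw [hkey]
  have : (1 - c)⁻¹ * ‖(-q1) + q2‖ ^ 2 ≤ ((A+a)/a) * (2 * ‖q1‖^2 + 2*‖q2‖^2) := by
    rw [hinv]; exact mul_le_mul_of_nonneg_left hq hpos.le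
  have h2 : ((A+a)/a) * (2 * ‖q1‖^2 + 2*‖q2‖^2)
      ≤ (4 * (A + a) / a) * ((1 / (n : ℝ)) * ∑ i, ‖xp i - y i‖ ^ 2)
        + (2 * (A + a) / a) * ((1 / (n : ℝ)) * ∑ i, ‖vp i - v i‖ ^ 2) := by
    have hk : (0:ℝ) ≤ (A + a) / a := hpos.le
    set k := (A + a) / a with hkdef
    have h4 : 4 * (A + a) / a = 4 * k := by rw [hkdef]; ring
    have h2' : 2 * (A + a) / a = 2 * k := by rw [hkdef]; ring
    rw [h4, h2']
    nlinarith [mul_le_mul_of_nonneg_left hs1 hk, mul_le_mul_of_nonneg_left hs2 hk,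
      mul_nonneg hk hsum1]
  linarith [hsplit]
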